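/- Vertical composition of 2-paths is associative up to rank-2 homotopy: if g, h, k are 2-paths in M with g(1,·) = h(0,·) and h(1,·) = k(0,·), then (g·h)·k is rank-2 homotopic to g·(h·k). -/

import Mathlib

open scoped Manifold

variable (E : Type*) [NormedAddCommGroup E] [NormedSpace ℝ E] [FiniteDimensional ℝ E]
variable {M : Type*} [TopologicalSpace M] [ChartedSpace E M]
  [IsManifold 𝓘(ℝ, E) (⊤ : ℕ∞) M]

/-- A 1-path in `M`: a smooth map `ℝ → M` that is constant near `(-∞, 0]` and near
`[1, ∞)` (in the sense of the `ε`-conditions). -/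
def IsOnePath (γ : ℝ → M) : Prop :=
  ContMDiff 𝓘(ℝ, ℝ) 𝓘(ℝ, E) (⊤ : ℕ∞) γ ∧
    ∃ ε > (0 : ℝ), (∀ t ≤ ε, γ t = γ 0) ∧ (∀ t, 1 - ε ≤ t → γ t = γ 1)

/-- A 2-path in `M`, as a smooth map `ℝ × ℝ → M` with coordinates `(s, t)`,
constant near the boundary in each variable, whose images at `t = 0` and `t = 1`
are single points. -/
def IsTwoPath (g : ℝ × ℝ → M) : Prop :=
  ContMDiff 𝓘(ℝ, ℝ × ℝ) 𝓘(ℝ, E) (⊤ : ℕ∞) g ∧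
    (∃ ε > (0 : ℝ),
      (∀ s t, s ≤ ε → g (s, t) = g (0, t)) ∧
      (∀ s t, 1 - ε ≤ s → g (s, t) = g (1, t)) ∧
      (∀ s t, t ≤ ε → g (s, t) = g (s, 0)) ∧
      (∀ s t, 1 - ε ≤ t → g (s, t) = g (s, 1))) ∧
    (∀ s s', g (s, 0) = g (s', 0)) ∧ (∀ s s', g (s, 1) = g (s', 1))

/-- A rank-1 homotopy: a 2-path whose differential has rank at most 1 at every point. -/
def IsRank1Homotopy (h : ℝ × ℝ → M) : Prop :=
  IsTwoPath E h ∧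
    ∀ p : ℝ × ℝ,
      Module.finrank ℝ
        (LinearMap.range (mfderiv 𝓘(ℝ, ℝ × ℝ) 𝓘(ℝ, E) h p).toLinearMap) ≤ 1

/-- Two 1-paths are rank-1 homotopic if they are joined by a rank-1 homotopy. -/
def Rank1Homotopic (γ γ' : ℝ → M) : Prop :=
  ∃ h : ℝ × ℝ → M, IsRank1Homotopy E h ∧ (∀ t, h (0, t) = γ t) ∧ (∀ t, h (1, t) = γ' t)

/-- A 3-path in `M`, as a smooth map `ℝ × ℝ × ℝ → M` with coordinates `(r, s, t)`. -/
def IsThreePath (α : ℝ × ℝ × ℝ → M) : Prop :=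
  ContMDiff 𝓘(ℝ, ℝ × ℝ × ℝ) 𝓘(ℝ, E) (⊤ : ℕ∞) α ∧
    (∃ ε > (0 : ℝ),
      (∀ r s t, r ≤ ε → α (r, s, t) = α (0, s, t)) ∧
      (∀ r s t, 1 - ε ≤ r → α (r, s, t) = α (1, s, t)) ∧
      (∀ r s t, s ≤ ε → α (r, s, t) = α (r, 0, t)) ∧
      (∀ r s t, 1 - ε ≤ s → α (r, s, t) = α (r, 1, t)) ∧
      (∀ r s t, t ≤ ε → α (r, s, t) = α (r, s, 0)) ∧
      (∀ r s t, 1 - ε ≤ t → α (r, s, t) = α (r, s, 1))) ∧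
    (∀ r s r' s', α (r, s, 0) = α (r', s', 0)) ∧
    (∀ r s r' s', α (r, s, 1) = α (r', s', 1))

/-- A rank-2 homotopy: a 3-path whose differential has rank at most 2 at every point and
whose restrictions to `s = 0` and `s = 1` are rank-1 homotopies. -/
def IsRank2Homotopy (α : ℝ × ℝ × ℝ → M) : Prop :=
  IsThreePath E α ∧
    (∀ p : ℝ × ℝ × ℝ,
      Module.finrank ℝ
        (LinearMap.range (mfderiv 𝓘(ℝ, ℝ × ℝ × ℝ) 𝓘(ℝ, E) α p).toLinearMap) ≤ 2) ∧
    IsRank1Homotopy E (fun p : ℝ × ℝ => α (p.1, 0, p.2)) ∧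
    IsRank1Homotopy E (fun p : ℝ × ℝ => α (p.1, 1, p.2))

/-- `α` is a rank-2 homotopy from the 2-path `g` to the 2-path `g'`. -/
def Rank2HomotopyFrom (α : ℝ × ℝ × ℝ → M) (g g' : ℝ × ℝ → M) : Prop :=
  IsRank2Homotopy E α ∧ (∀ s t, α (0, s, t) = g (s, t)) ∧ (∀ s t, α (1, s, t) = g' (s, t))

/-- Two 2-paths are rank-2 homotopic if they are joined by a rank-2 homotopy. -/
def Rank2Homotopic (g g' : ℝ × ℝ → M) : Prop :=
  ∃ α : ℝ × ℝ × ℝ → M, Rank2HomotopyFrom E α g g'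

/-- Vertical composition of 2-paths. -/
noncomputable def vertComp (g h : ℝ × ℝ → M) : ℝ × ℝ → M := fun p =>
  if p.1 ≤ 1 / 2 then g (2 * p.1, p.2) else h (2 * p.1 - 1, p.2)

section AssocAux

/-- The transition function used in the `r`-direction. -/
noncomputable def lamA (r : ℝ) : ℝ := Real.smoothTransition (3 * r - 1)

lemma lamA_contDiff : ContDiff ℝ (⊤ : ℕ∞) lamA := by
  have : lamA = Real.smoothTransition ∘ fun r : ℝ => 3 * r - 1 := rfl
  rw [this]
  exact Real.smoothTransition.contDiff.comp ((contDiff_const.mul contDiff_id).sub contDiff_const)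

lemma lamA_nonneg (r : ℝ) : 0 ≤ lamA r := Real.smoothTransition.nonneg _

lemma lamA_le_one (r : ℝ) : lamA r ≤ 1 := Real.smoothTransition.le_one _

lemma lamA_eq_zero {r : ℝ} (hr : r ≤ 1 / 3) : lamA r = 0 :=
  Real.smoothTransition.zero_of_nonpos (by linarith)

lemma lamA_eq_one {r : ℝ} (hr : 2 / 3 ≤ r) : lamA r = 1 :=
  Real.smoothTransition.one_of_one_le (by linarith)

variable {M' : Type*} [TopologicalSpace M']

/-- Time-`L` slice of the associativity homotopy. -/
noncomputable def auxB (g h k : ℝ × ℝ → M') (L s t : ℝ) : M' :=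
  if s ≤ (1 + L) / 4 then g (4 * s / (1 + L), t)
  else if s ≤ (2 + L) / 4 then h (4 * s - 1 - L, t)
  else k ((4 * s - 2 - L) / (2 - L), t)

/-- The associativity homotopy. -/
noncomputable def auxAlpha (g h k : ℝ × ℝ → M') : ℝ × ℝ × ℝ → M' :=
  fun p => auxB g h k (lamA p.1) p.2.1 p.2.2

end AssocAux

lemma aux_rank {F' : Type*} [NormedAddCommGroup F'] [NormedSpace ℝ F'] [FiniteDimensional ℝ F']
    {G' : Type*} [NormedAddCommGroup G'] [NormedSpace ℝ G']
    (F : F' → M) (q : G' → F') (p : G')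
    (hF : MDifferentiableAt 𝓘(ℝ, F') 𝓘(ℝ, E) F (q p))
    (hq : MDifferentiableAt 𝓘(ℝ, G') 𝓘(ℝ, F') q p) :
    Module.finrank ℝ
      (LinearMap.range (mfderiv 𝓘(ℝ, G') 𝓘(ℝ, E) (F ∘ q) p).toLinearMap) ≤
      Module.finrank ℝ F' := by
  haveI : Module.Finite ℝ (TangentSpace 𝓘(ℝ, F') (q p)) := inferInstanceAs (Module.Finite ℝ F')
  rw [mfderiv_comp p hF hq]
  have h1 : LinearMap.range ((mfderiv 𝓘(ℝ, F') 𝓘(ℝ, E) F (q p)).comp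
      (mfderiv 𝓘(ℝ, G') 𝓘(ℝ, F') q p)).toLinearMap ≤
      LinearMap.range (mfderiv 𝓘(ℝ, F') 𝓘(ℝ, E) F (q p)).toLinearMap := by
    rw [ContinuousLinearMap.toLinearMap_comp]
    exact LinearMap.range_comp_le_range _ _
  haveI : Module.Finite ℝ (LinearMap.range (mfderiv 𝓘(ℝ, F') 𝓘(ℝ, E) F (q p)).toLinearMap) :=
    Module.Finite.range _
  exact le_trans (Submodule.finrank_mono h1) (LinearMap.finrank_range_le _)

lemma aux_rank2 (F : ℝ × ℝ → M) (q : ℝ × ℝ × ℝ → ℝ × ℝ) (p : ℝ × ℝ × ℝ)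
    (hF : ContMDiff 𝓘(ℝ, ℝ × ℝ) 𝓘(ℝ, E) (⊤ : ℕ∞) F)
    (hq : ContMDiff 𝓘(ℝ, ℝ × ℝ × ℝ) 𝓘(ℝ, ℝ × ℝ) (⊤ : ℕ∞) q) :
    Module.finrank ℝ
      (LinearMap.range (mfderiv 𝓘(ℝ, ℝ × ℝ × ℝ) 𝓘(ℝ, E) (F ∘ q) p).toLinearMap) ≤ 2 := by
  have := aux_rank E F q p (hF.mdifferentiableAt (by simp)) (hq.mdifferentiableAt (by simp))
  simpa using this

lemma isRank1Homotopy_snd (γ : ℝ → M) (hsm : ContMDiff 𝓘(ℝ, ℝ) 𝓘(ℝ, E) (⊤ : ℕ∞) γ)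
    (ε : ℝ) (hε : 0 < ε) (h0 : ∀ t, t ≤ ε → γ t = γ 0) (h1 : ∀ t, 1 - ε ≤ t → γ t = γ 1) :
    IsRank1Homotopy E (fun p : ℝ × ℝ => γ p.2) := by
  constructor
  · exact ⟨hsm.comp (contMDiff_iff_contDiff.mpr contDiff_snd),
      ⟨ε, hε, fun s t _ => rfl, fun s t _ => rfl, fun s t ht => h0 t ht, fun s t ht => h1 t ht⟩,
      fun s s' => rfl, fun s s' => rfl⟩
  · intro p
    have hq : ContMDiff 𝓘(ℝ, ℝ × ℝ) 𝓘(ℝ, ℝ) (⊤ : ℕ∞) (Prod.snd : ℝ × ℝ → ℝ) :=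
      contMDiff_iff_contDiff.mpr contDiff_snd
    have := aux_rank E γ (Prod.snd : ℝ × ℝ → ℝ) p (hsm.mdifferentiableAt (by simp))
      (hq.mdifferentiableAt (by simp))
    simpa [Function.comp_def] using this

/-- Vertical composition of 2-paths is associative up to rank-2 homotopy. -/
theorem vertComp_assoc_rank2Homotopic (g h k : ℝ × ℝ → M)
    (hg : IsTwoPath E g) (hh : IsTwoPath E h) (hk : IsTwoPath E k)
    (hgh : ∀ t, g (1, t) = h (0, t)) (hhk : ∀ t, h (1, t) = k (0, t)) :
    Rank2Homotopic E (vertComp (vertComp g h) k) (vertComp g (vertComp h k)) := by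
  classical
  obtain ⟨gsm, ⟨εg, hεg, gs0, gs1, gt0, gt1⟩, gc0, gc1⟩ := hg
  obtain ⟨hsm, ⟨εh, hεh, hs0, hs1, ht0, ht1⟩, hc0, hc1⟩ := hh
  obtain ⟨ksm, ⟨εk, hεk, ks0, ks1, kt0, kt1⟩, kc0, kc1⟩ := hk
  set δ : ℝ := min (min εg (min εh εk)) 1 with hδdef
  have hδ : 0 < δ := lt_min (lt_min hεg (lt_min hεh hεk)) one_pos
  have hδg : δ ≤ εg := le_trans (min_le_left _ _) (min_le_left _ _)
  have hδh : δ ≤ εh := le_trans (min_le_left _ _) (le_trans (min_le_right _ _) (min_le_left _ _))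
  have hδk : δ ≤ εk := le_trans (min_le_left _ _) (le_trans (min_le_right _ _) (min_le_right _ _))
  have hδ1 : δ ≤ 1 := min_le_right _ _
  -- local descriptions of the homotopy
  have A1 : ∀ r s t : ℝ, s < (1 + lamA r) / 4 + δ / 8 →
      auxAlpha g h k (r, s, t) = g (4 * s / (1 + lamA r), t) := by
    intro r s t hs
    have hl0 := lamA_nonneg r
    have hl1 := lamA_le_one r
    show auxB g h k (lamA r) s t = _
    rcases le_or_gt s ((1 + lamA r) / 4) with hc | hc
    · simp only [auxB]; rw [if_pos hc]
    · have hc2 : s ≤ (2 + lamA r) / 4 := by linarith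
      simp only [auxB]; rw [if_neg (not_le.mpr hc), if_pos hc2]
      have hpos : (0 : ℝ) < 1 + lamA r := by linarith
      have e1 : h (4 * s - 1 - lamA r, t) = h (0, t) := hs0 _ t (by linarith)
      have e2 : g (4 * s / (1 + lamA r), t) = g (1, t) := by
        refine gs1 _ t ?_
        have h1 : (1 : ℝ) ≤ 4 * s / (1 + lamA r) := by
          rw [le_div_iff₀ hpos]; linarith
        linarith
      rw [e1, e2]
      exact (hgh t).symm
  have A2 : ∀ r s t : ℝ, (1 + lamA r) / 4 < s → s < (2 + lamA r) / 4 + δ / 8 →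
      auxAlpha g h k (r, s, t) = h (4 * s - 1 - lamA r, t) := by
    intro r s t hlo hhi
    have hl0 := lamA_nonneg r
    have hl1 := lamA_le_one r
    show auxB g h k (lamA r) s t = _
    have hnot1 : ¬ s ≤ (1 + lamA r) / 4 := not_le.mpr hlo
    rcases le_or_gt s ((2 + lamA r) / 4) with hc | hc
    · simp only [auxB]; rw [if_neg hnot1, if_pos hc]
    · simp only [auxB]; rw [if_neg hnot1, if_neg (not_le.mpr hc)]
      have hpos : (0 : ℝ) < 2 - lamA r := by linarith
      have e1 : k ((4 * s - 2 - lamA r) / (2 - lamA r), t) = k (0, t) := by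
        refine ks0 _ t ?_
        rw [div_le_iff₀ hpos]
        nlinarith [mul_nonneg hεk.le (by linarith : (0 : ℝ) ≤ 1 - lamA r)]
      have e2 : h (4 * s - 1 - lamA r, t) = h (1, t) := hs1 _ t (by linarith)
      rw [e1, e2]
      exact (hhk t).symm
  have A3 : ∀ r s t : ℝ, (2 + lamA r) / 4 < s →
      auxAlpha g h k (r, s, t) = k ((4 * s - 2 - lamA r) / (2 - lamA r), t) := by
    intro r s t hs
    have hl0 := lamA_nonneg r
    show auxB g h k (lamA r) s t = _
    simp only [auxB]
    rw [if_neg (not_le.mpr (by linarith)), if_neg (not_le.mpr hs)]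
  -- smooth coordinate maps
  have q1sm : ContMDiff 𝓘(ℝ, ℝ × ℝ × ℝ) 𝓘(ℝ, ℝ × ℝ) (⊤ : ℕ∞)
      (fun q : ℝ × ℝ × ℝ => (4 * q.2.1 / (1 + lamA q.1), q.2.2)) := by
    rw [contMDiff_iff_contDiff]
    refine ContDiff.prodMk ?_ contDiff_snd.snd
    exact (contDiff_const.mul contDiff_snd.fst).div
      (contDiff_const.add (lamA_contDiff.comp contDiff_fst))
      (fun q => ne_of_gt (by linarith [lamA_nonneg q.1]))
  have q2sm : ContMDiff 𝓘(ℝ, ℝ × ℝ × ℝ) 𝓘(ℝ, ℝ × ℝ) (⊤ : ℕ∞)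
      (fun q : ℝ × ℝ × ℝ => (4 * q.2.1 - 1 - lamA q.1, q.2.2)) := by
    rw [contMDiff_iff_contDiff]
    exact (((contDiff_const.mul contDiff_snd.fst).sub contDiff_const).sub
      (lamA_contDiff.comp contDiff_fst)).prodMk contDiff_snd.snd
  have q3sm : ContMDiff 𝓘(ℝ, ℝ × ℝ × ℝ) 𝓘(ℝ, ℝ × ℝ) (⊤ : ℕ∞)
      (fun q : ℝ × ℝ × ℝ => ((4 * q.2.1 - 2 - lamA q.1) / (2 - lamA q.1), q.2.2)) := by
    rw [contMDiff_iff_contDiff]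
    refine ContDiff.prodMk ?_ contDiff_snd.snd
    exact (((contDiff_const.mul contDiff_snd.fst).sub contDiff_const).sub
      (lamA_contDiff.comp contDiff_fst)).div
      (contDiff_const.sub (lamA_contDiff.comp contDiff_fst))
      (fun q => ne_of_gt (by linarith [lamA_le_one q.1]))
  have clam : Continuous lamA := lamA_contDiff.continuous
  have cs : Continuous fun q : ℝ × ℝ × ℝ => q.2.1 := continuous_fst.comp continuous_snd
  have cc1 : Continuous fun q : ℝ × ℝ × ℝ => (1 + lamA q.1) / 4 + δ / 8 :=
    ((continuous_const.add (clam.comp continuous_fst)).div_const 4).add continuous_const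
  have cc1' : Continuous fun q : ℝ × ℝ × ℝ => (1 + lamA q.1) / 4 :=
    (continuous_const.add (clam.comp continuous_fst)).div_const 4
  have cc2 : Continuous fun q : ℝ × ℝ × ℝ => (2 + lamA q.1) / 4 + δ / 8 :=
    ((continuous_const.add (clam.comp continuous_fst)).div_const 4).add continuous_const
  have cc2' : Continuous fun q : ℝ × ℝ × ℝ => (2 + lamA q.1) / 4 :=
    (continuous_const.add (clam.comp continuous_fst)).div_const 4
  -- main smoothness and rank bound
  have main : ∀ p : ℝ × ℝ × ℝ, ContMDiffAt 𝓘(ℝ, ℝ × ℝ × ℝ) 𝓘(ℝ, E) (⊤ : ℕ∞) (auxAlpha g h k) p ∧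
      Module.finrank ℝ
        (LinearMap.range
          (mfderiv 𝓘(ℝ, ℝ × ℝ × ℝ) 𝓘(ℝ, E) (auxAlpha g h k) p).toLinearMap) ≤ 2 := by
    intro p
    rcases le_or_gt p.2.1 ((1 + lamA p.1) / 4) with hc1 | hc1
    · have hU : IsOpen {q : ℝ × ℝ × ℝ | q.2.1 < (1 + lamA q.1) / 4 + δ / 8} := isOpen_lt cs cc1
      have hmem : p ∈ {q : ℝ × ℝ × ℝ | q.2.1 < (1 + lamA q.1) / 4 + δ / 8} := by
        simp only [Set.mem_setOf_eq]; linarith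
      have heq : auxAlpha g h k =ᶠ[nhds p]
          (g ∘ fun q : ℝ × ℝ × ℝ => (4 * q.2.1 / (1 + lamA q.1), q.2.2)) :=
        Filter.eventuallyEq_of_mem (hU.mem_nhds hmem) (fun q hq => A1 q.1 q.2.1 q.2.2 hq)
      refine ⟨((gsm.comp q1sm).contMDiffAt).congr_of_eventuallyEq heq, ?_⟩
      rw [heq.mfderiv_eq]
      exact aux_rank2 E g _ p gsm q1sm
    · rcases le_or_gt p.2.1 ((2 + lamA p.1) / 4) with hc2 | hc2
      · have hU : IsOpen {q : ℝ × ℝ × ℝ |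
            (1 + lamA q.1) / 4 < q.2.1 ∧ q.2.1 < (2 + lamA q.1) / 4 + δ / 8} :=
          (isOpen_lt cc1' cs).inter (isOpen_lt cs cc2)
        have hmem : p ∈ {q : ℝ × ℝ × ℝ |
            (1 + lamA q.1) / 4 < q.2.1 ∧ q.2.1 < (2 + lamA q.1) / 4 + δ / 8} := by
          simp only [Set.mem_setOf_eq]
          exact ⟨hc1, by linarith⟩
        have heq : auxAlpha g h k =ᶠ[nhds p]
            (h ∘ fun q : ℝ × ℝ × ℝ => (4 * q.2.1 - 1 - lamA q.1, q.2.2)) :=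
          Filter.eventuallyEq_of_mem (hU.mem_nhds hmem)
            (fun q hq => A2 q.1 q.2.1 q.2.2 hq.1 hq.2)
        refine ⟨((hsm.comp q2sm).contMDiffAt).congr_of_eventuallyEq heq, ?_⟩
        rw [heq.mfderiv_eq]
        exact aux_rank2 E h _ p hsm q2sm
      · have hU : IsOpen {q : ℝ × ℝ × ℝ | (2 + lamA q.1) / 4 < q.2.1} := isOpen_lt cc2' cs
        have hmem : p ∈ {q : ℝ × ℝ × ℝ | (2 + lamA q.1) / 4 < q.2.1} := hc2
        have heq : auxAlpha g h k =ᶠ[nhds p]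
            (k ∘ fun q : ℝ × ℝ × ℝ => ((4 * q.2.1 - 2 - lamA q.1) / (2 - lamA q.1), q.2.2)) :=
          Filter.eventuallyEq_of_mem (hU.mem_nhds hmem) (fun q hq => A3 q.1 q.2.1 q.2.2 hq)
        refine ⟨((ksm.comp q3sm).contMDiffAt).congr_of_eventuallyEq heq, ?_⟩
        rw [heq.mfderiv_eq]
        exact aux_rank2 E k _ p ksm q3sm
  -- boundary flatness
  set ε3 : ℝ := min (δ / 8) (1 / 3) with hε3def
  have hε3pos : 0 < ε3 := lt_min (by linarith) (by norm_num)
  have hε3a : ε3 ≤ δ / 8 := min_le_left _ _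
  have hε3b : ε3 ≤ 1 / 3 := min_le_right _ _
  have Fr0 : ∀ r s t : ℝ, r ≤ ε3 → auxAlpha g h k (r, s, t) = auxAlpha g h k (0, s, t) := by
    intro r s t hr
    show auxB g h k (lamA r) s t = auxB g h k (lamA 0) s t
    rw [lamA_eq_zero (by linarith), lamA_eq_zero (by norm_num)]
  have Fr1 : ∀ r s t : ℝ, 1 - ε3 ≤ r → auxAlpha g h k (r, s, t) = auxAlpha g h k (1, s, t) := by
    intro r s t hr
    show auxB g h k (lamA r) s t = auxB g h k (lamA 1) s t
    rw [lamA_eq_one (by linarith), lamA_eq_one (by norm_num)]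
  have Fs0 : ∀ r s t : ℝ, s ≤ ε3 → auxAlpha g h k (r, s, t) = auxAlpha g h k (r, 0, t) := by
    intro r s t hs
    have hl0 := lamA_nonneg r
    have hl1 := lamA_le_one r
    rw [A1 r s t (by linarith), A1 r 0 t (by linarith)]
    have h4 : 4 * (0 : ℝ) / (1 + lamA r) = 0 := by simp
    rw [h4]
    refine gs0 _ t ?_
    rw [div_le_iff₀ (by linarith : (0 : ℝ) < 1 + lamA r)]
    nlinarith [mul_nonneg hεg.le hl0]
  have Fs1 : ∀ r s t : ℝ, 1 - ε3 ≤ s → auxAlpha g h k (r, s, t) = auxAlpha g h k (r, 1, t) := by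
    intro r s t hs
    have hl0 := lamA_nonneg r
    have hl1 := lamA_le_one r
    rw [A3 r s t (by linarith), A3 r 1 t (by linarith)]
    have h4 : (4 * (1 : ℝ) - 2 - lamA r) / (2 - lamA r) = 1 := by
      rw [show 4 * (1 : ℝ) - 2 - lamA r = 2 - lamA r by ring]
      exact div_self (by linarith)
    rw [h4]
    refine ks1 _ t ?_
    rw [le_div_iff₀ (by linarith : (0 : ℝ) < 2 - lamA r)]
    nlinarith [mul_nonneg hεk.le (by linarith : (0 : ℝ) ≤ 1 - lamA r)]
  have Ft0 : ∀ r s t : ℝ, t ≤ ε3 → auxAlpha g h k (r, s, t) = auxAlpha g h k (r, s, 0) := by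
    intro r s t ht
    show auxB g h k (lamA r) s t = auxB g h k (lamA r) s 0
    simp only [auxB]
    split_ifs with h1 h2
    · exact gt0 _ _ (by linarith)
    · exact ht0 _ _ (by linarith)
    · exact kt0 _ _ (by linarith)
  have Ft1 : ∀ r s t : ℝ, 1 - ε3 ≤ t → auxAlpha g h k (r, s, t) = auxAlpha g h k (r, s, 1) := by
    intro r s t ht
    show auxB g h k (lamA r) s t = auxB g h k (lamA r) s 1
    simp only [auxB]
    split_ifs with h1 h2
    · exact gt1 _ _ (by linarith)
    · exact ht1 _ _ (by linarith)
    · exact kt1 _ _ (by linarith)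
  -- corners
  have Hc0 : ∀ r s : ℝ, auxAlpha g h k (r, s, 0) = g (0, 0) := by
    intro r s
    show auxB g h k (lamA r) s 0 = g (0, 0)
    simp only [auxB]
    split_ifs with h1 h2
    · exact gc0 _ _
    · rw [hc0 _ 0, ← hgh 0]; exact gc0 _ _
    · rw [kc0 _ 0, ← hhk 0, hc0 1 0, ← hgh 0]; exact gc0 _ _
  have Hc1 : ∀ r s : ℝ, auxAlpha g h k (r, s, 1) = g (0, 1) := by
    intro r s
    show auxB g h k (lamA r) s 1 = g (0, 1)
    simp only [auxB]
    split_ifs with h1 h2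
    · exact gc1 _ _
    · rw [hc1 _ 0, ← hgh 1]; exact gc1 _ _
    · rw [kc1 _ 0, ← hhk 1, hc1 1 0, ← hgh 1]; exact gc1 _ _
  -- rank-1 homotopies on the two faces
  have hA0 : (fun p : ℝ × ℝ => auxAlpha g h k (p.1, 0, p.2)) =
      fun p : ℝ × ℝ => g (0, p.2) := by
    funext p
    have hl0 := lamA_nonneg p.1
    rw [A1 p.1 0 p.2 (by linarith)]
    norm_num
  have hA1 : (fun p : ℝ × ℝ => auxAlpha g h k (p.1, 1, p.2)) =
      fun p : ℝ × ℝ => k (1, p.2) := by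
    funext p
    have hl1 := lamA_le_one p.1
    rw [A3 p.1 1 p.2 (by linarith)]
    rw [show 4 * (1 : ℝ) - 2 - lamA p.1 = 2 - lamA p.1 by ring,
      div_self (ne_of_gt (by linarith : (0 : ℝ) < 2 - lamA p.1))]
  have hR0 : IsRank1Homotopy E (fun p : ℝ × ℝ => auxAlpha g h k (p.1, 0, p.2)) := by
    rw [hA0]
    exact isRank1Homotopy_snd E (fun t => g (0, t))
      (gsm.comp (contMDiff_iff_contDiff.mpr (contDiff_const.prodMk contDiff_id)))
      εg hεg (fun t ht => gt0 0 t ht) (fun t ht => gt1 0 t ht)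
  have hR1 : IsRank1Homotopy E (fun p : ℝ × ℝ => auxAlpha g h k (p.1, 1, p.2)) := by
    rw [hA1]
    exact isRank1Homotopy_snd E (fun t => k (1, t))
      (ksm.comp (contMDiff_iff_contDiff.mpr (contDiff_const.prodMk contDiff_id)))
      εk hεk (fun t ht => kt0 1 t ht) (fun t ht => kt1 1 t ht)
  -- endpoints
  have vc : ∀ (a b : ℝ × ℝ → M) (s t : ℝ),
      vertComp a b (s, t) = if s ≤ 1 / 2 then a (2 * s, t) else b (2 * s - 1, t) :=
    fun a b s t => rfl
  have hend0 : ∀ s t : ℝ, auxAlpha g h k (0, s, t) = vertComp (vertComp g h) k (s, t) := by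
    intro s t
    show auxB g h k (lamA 0) s t = _
    rw [lamA_eq_zero (by norm_num), vc]
    simp only [auxB]
    rcases le_or_gt s (1 / 4 : ℝ) with h1 | h1
    · rw [if_pos (show s ≤ (1 + (0 : ℝ)) / 4 by linarith),
        if_pos (show s ≤ (1 : ℝ) / 2 by linarith), vc,
        if_pos (show 2 * s ≤ (1 : ℝ) / 2 by linarith),
        show 4 * s / (1 + (0 : ℝ)) = 2 * (2 * s) by ring]
    · rcases le_or_gt s (1 / 2 : ℝ) with h2 | h2
      · rw [if_neg (show ¬ s ≤ (1 + (0 : ℝ)) / 4 by push_neg; linarith),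
          if_pos (show s ≤ (2 + (0 : ℝ)) / 4 by linarith), if_pos h2, vc,
          if_neg (show ¬ 2 * s ≤ (1 : ℝ) / 2 by push_neg; linarith),
          show 4 * s - 1 - (0 : ℝ) = 2 * (2 * s) - 1 by ring]
      · rw [if_neg (show ¬ s ≤ (1 + (0 : ℝ)) / 4 by push_neg; linarith),
          if_neg (show ¬ s ≤ (2 + (0 : ℝ)) / 4 by push_neg; linarith),
          if_neg (show ¬ s ≤ (1 : ℝ) / 2 by push_neg; linarith),
          show (4 * s - 2 - (0 : ℝ)) / (2 - (0 : ℝ)) = 2 * s - 1 by ring]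
  have hend1 : ∀ s t : ℝ, auxAlpha g h k (1, s, t) = vertComp g (vertComp h k) (s, t) := by
    intro s t
    show auxB g h k (lamA 1) s t = _
    rw [lamA_eq_one (by norm_num), vc]
    simp only [auxB]
    rcases le_or_gt s (1 / 2 : ℝ) with h1 | h1
    · rw [if_pos (show s ≤ (1 + (1 : ℝ)) / 4 by linarith), if_pos h1,
        show 4 * s / (1 + (1 : ℝ)) = 2 * s by ring]
    · rcases le_or_gt s (3 / 4 : ℝ) with h2 | h2
      · rw [if_neg (show ¬ s ≤ (1 + (1 : ℝ)) / 4 by push_neg; linarith),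
          if_pos (show s ≤ (2 + (1 : ℝ)) / 4 by linarith), if_neg (not_le.mpr h1), vc,
          if_pos (show 2 * s - 1 ≤ (1 : ℝ) / 2 by linarith),
          show 4 * s - 1 - (1 : ℝ) = 2 * (2 * s - 1) by ring]
      · rw [if_neg (show ¬ s ≤ (1 + (1 : ℝ)) / 4 by push_neg; linarith),
          if_neg (show ¬ s ≤ (2 + (1 : ℝ)) / 4 by push_neg; linarith),
          if_neg (not_le.mpr h1), vc,
          if_neg (show ¬ 2 * s - 1 ≤ (1 : ℝ) / 2 by push_neg; linarith),
          show (4 * s - 2 - (1 : ℝ)) / (2 - (1 : ℝ)) = 2 * (2 * s - 1) - 1 by ring]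
  exact ⟨auxAlpha g h k,
    ⟨⟨⟨fun p => (main p).1, ⟨ε3, hε3pos, Fr0, Fr1, Fs0, Fs1, Ft0, Ft1⟩,
      fun r s r' s' => (Hc0 r s).trans (Hc0 r' s').symm,
      fun r s r' s' => (Hc1 r s).trans (Hc1 r' s').symm⟩,
      fun p => (main p).2, hR0, hR1⟩, hend0, hend1⟩⟩
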